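/- Let λ = 0 and H_RB = kX_∞ the free Rota-Baxter algebra of weight zero on X. Then for all p, q ≥ 0, H^(p) ⋄ H^(q) ⊆ H^(p+q); that is, the product ⋄ respects the total degree grading. -/

import Mathlib

open TensorProduct

universe u v

/-- Letters of Rota-Baxter bracketed words: either a variable from `X` or a
bracketed word `⌊w⌋` (a list of letters). -/
inductive RBL (X : Type u) : Type u
  | var : X → RBL X
  | br : List (RBL X) → RBL X

namespace RBL

variable {X : Type u}

/-- `a.isBr = true` iff the letter `a` is a bracketed element `⌊w⌋ ∈ ⌊X_∞⌋`. -/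
def isBr : RBL X → Bool
  | var _ => false
  | br _ => true

mutual
  /-- Validity of a letter: the inside of a bracket must be a Rota-Baxter bracketed word. -/
  def valid : RBL X → Prop
    | var _ => True
    | br l => wordValid l
  /-- `wordValid l` says that the list of letters `l` is a Rota-Baxter bracketed word,
  i.e. all letters are valid and the letters alternate (no two consecutive brackets). -/
  def wordValid : List (RBL X) → Prop
    | [] => True
    | [a] => valid a
    | a :: b :: l => valid a ∧ ¬(a.isBr = true ∧ b.isBr = true) ∧ wordValid (b :: l)
end

lemma wordValid_nil : wordValid ([] : List (RBL X)) := by simp [wordValid]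

lemma wordValid_var (x : X) : wordValid [var x] := by simp [wordValid, valid]

lemma wordValid_br {l : List (RBL X)} (h : wordValid l) : wordValid [br l] := by
  simpa [wordValid, valid] using h

mutual
  /-- The total degree of a letter. -/
  def degL : RBL X → ℕ
    | var _ => 1
    | br l => degW l + 1
  /-- The total degree of a word: the number of occurrences of brackets (i.e. of `P`)
  plus the number of occurrences of letters of `X`. -/
  def degW : List (RBL X) → ℕ
    | [] => 0
    | a :: l => degL a + degW l
end

end RBL

/-- The set `X_∞` of Rota-Baxter bracketed words on `X`. -/
def RBWord (X : Type u) : Type u := {l : List (RBL X) // RBL.wordValid l}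

namespace RBWord

variable {X : Type u}

/-- The empty word `1`. -/
def one : RBWord X := ⟨[], RBL.wordValid_nil⟩

/-- The total degree of a Rota-Baxter bracketed word. -/
def deg (w : RBWord X) : ℕ := RBL.degW w.1

end RBWord

variable (k : Type v) [CommRing k] (X : Type u)

/-- The free `k`-module `kX_∞` on the Rota-Baxter bracketed words. -/
abbrev RBMod : Type max u v := RBWord X →₀ k

variable {X}

/-- A Rota-Baxter bracketed word viewed as a basis element of `kX_∞`. -/
noncomputable def sing (w : RBWord X) : RBMod k X := Finsupp.single w 1

variable (X)

/-- The Rota-Baxter operator `P` on `kX_∞`, sending a basis word `w` to `⌊w⌋`. -/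
noncomputable def Pop : RBMod k X →ₗ[k] RBMod k X :=
  Finsupp.lmapDomain k k fun w => (⟨[RBL.br w.1], RBL.wordValid_br w.2⟩ : RBWord X)

/-- Concatenation on the left by `u₀` and on the right by `v₀`, as a linear map on `kX_∞`
(sending basis words whose concatenation is not valid to `0`; in all uses below
the concatenations are valid). -/
noncomputable def concatLR (u₀ v₀ : List (RBL X)) : RBMod k X →ₗ[k] RBMod k X :=
  Finsupp.lsum k fun w =>
    letI := Classical.dec (RBL.wordValid (u₀ ++ w.1 ++ v₀))
    if h : RBL.wordValid (u₀ ++ w.1 ++ v₀) then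
      Finsupp.lsingle (⟨u₀ ++ w.1 ++ v₀, h⟩ : RBWord X) else 0

/-- The counit `ε : kX_∞ → k`, `ε(1) = 1` and `ε(w) = 0` for basis words `w ≠ 1`. -/
noncomputable def eps : RBMod k X →ₗ[k] k := Finsupp.lapply RBWord.one

/-- The homogeneous component `H^(n)` of `kX_∞`: the span of the basis words of total
degree `n`. -/
noncomputable def Hdeg (n : ℕ) : Submodule k (RBMod k X) :=
  Finsupp.supported k k {w : RBWord X | w.deg = n}

variable (lam : k)

/-- The data of the product `⋄` on the free Rota-Baxter algebra `kX_∞` of weight `lam`,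
together with its recursive defining equations:
* if the concatenation of `u` and `v` is again a Rota-Baxter bracketed word (in particular
  if `u` or `v` is empty, or if the last letter of `u` or the first letter of `v` is a
  variable), then `u ⋄ v` is the concatenation `uv`;
* if `u = u₀⌊ā⌋` and `v = ⌊b̄⌋v₀`, then
  `u ⋄ v = u₀(⌊⌊ā⌋ ⋄ b̄⌋ + ⌊ā ⋄ ⌊b̄⌋⌋ + λ⌊ā ⋄ b̄⌋)v₀`. -/
structure FreeRBAData where
  /-- the product `⋄`, as a `k`-bilinear map -/
  d : RBMod k X →ₗ[k] RBMod k X →ₗ[k] RBMod k X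
  d_concat : ∀ (u v : RBWord X) (h : RBL.wordValid (u.1 ++ v.1)),
    d (sing k u) (sing k v) = sing k ⟨u.1 ++ v.1, h⟩
  d_br : ∀ (u₀ v₀ : List (RBL X)) (a b : RBWord X)
    (hu : RBL.wordValid (u₀ ++ [RBL.br a.1])) (hv : RBL.wordValid (RBL.br b.1 :: v₀)),
    d (sing k ⟨u₀ ++ [RBL.br a.1], hu⟩) (sing k ⟨RBL.br b.1 :: v₀, hv⟩)
      = concatLR k X u₀ v₀
          (Pop k X (d (Pop k X (sing k a)) (sing k b))
            + Pop k X (d (sing k a) (Pop k X (sing k b)))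
            + lam • Pop k X (d (sing k a) (sing k b)))

namespace FreeRBAData

variable {k X lam}

/-- The componentwise product `⋄ ⊗ ⋄` on `kX_∞ ⊗ kX_∞`. -/
noncomputable def mulT (D : FreeRBAData k X lam) :
    (RBMod k X ⊗[k] RBMod k X) →ₗ[k] (RBMod k X ⊗[k] RBMod k X) →ₗ[k]
      (RBMod k X ⊗[k] RBMod k X) :=
  TensorProduct.map₂ D.d D.d

end FreeRBAData

/-- The free Rota-Baxter algebra `kX_∞` of weight `lam` together with the coproduct `Δ`,
characterized by its recursive defining equations:
`Δ(1) = 1 ⊗ 1`, `Δ(x) = x ⊗ 1 + 1 ⊗ x` for `x ∈ X`,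
`Δ(⌊w⌋) = ⌊w⌋ ⊗ 1 + (id ⊗ P)Δ(w)`, and
`Δ(w₁ ⋄ ⋯ ⋄ w_m) = Δ(w₁) ⋄ ⋯ ⋄ Δ(w_m)` for the `⋄`-factorization of a word into its
(alternating) sequence of letters. -/
structure FreeRBBialgData extends FreeRBAData k X lam where
  /-- the coproduct `Δ` -/
  Dl : RBMod k X →ₗ[k] (RBMod k X ⊗[k] RBMod k X)
  Dl_one : Dl (sing k RBWord.one) = sing k RBWord.one ⊗ₜ[k] sing k RBWord.one
  Dl_var : ∀ (x : X),
    Dl (sing k ⟨[RBL.var x], RBL.wordValid_var x⟩)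
      = sing k ⟨[RBL.var x], RBL.wordValid_var x⟩ ⊗ₜ[k] sing k RBWord.one
        + sing k RBWord.one ⊗ₜ[k] sing k ⟨[RBL.var x], RBL.wordValid_var x⟩
  Dl_br : ∀ w : RBWord X,
    Dl (Pop k X (sing k w))
      = Pop k X (sing k w) ⊗ₜ[k] sing k RBWord.one
        + TensorProduct.map LinearMap.id (Pop k X) (Dl (sing k w))
  Dl_cons : ∀ (a : RBL X) (l : List (RBL X)) (h : RBL.wordValid (a :: l))
    (ha : RBL.wordValid [a]) (hl : RBL.wordValid l), l ≠ [] →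
    Dl (sing k ⟨a :: l, h⟩)
      = TensorProduct.map₂ d d (Dl (sing k ⟨[a], ha⟩)) (Dl (sing k ⟨l, hl⟩))

namespace RBL

variable {X : Type u}

lemma wordValid_map_var (s : List X) : wordValid (s.map RBL.var) := by
  induction s with
  | nil => exact wordValid_nil
  | cons a t ih =>
    cases t with
    | nil => exact wordValid_var a
    | cons b t' =>
      simp only [List.map_cons] at ih ⊢
      exact ⟨by simp [valid], by simp [isBr], ih⟩

end RBL

variable {X}

/-- The word `x₁ ⋯ x_m ∈ M(X)` as a basis element of `kX_∞`. -/
noncomputable def varWord (s : List X) : RBMod k X :=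
  sing k ⟨s.map RBL.var, RBL.wordValid_map_var s⟩

/-- A letter in `X ∪ ⌊X_∞⌋`, viewed as a basis element of `kX_∞` (invalid letters are
sent to `0`; they do not occur below). -/
noncomputable def letterMod (a : RBL X) : RBMod k X :=
  letI := Classical.dec (RBL.wordValid [a])
  if h : RBL.wordValid [a] then sing k ⟨[a], h⟩ else 0

variable (X)

/-- The tensor product `H^(p) ⊗ H^(q)` of homogeneous components, as a submodule of
`kX_∞ ⊗ kX_∞`. -/
noncomputable def HdegT (p q : ℕ) : Submodule k (RBMod k X ⊗[k] RBMod k X) :=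
  Submodule.map₂ (TensorProduct.mk k (RBMod k X) (RBMod k X)) (Hdeg k X p) (Hdeg k X q)

namespace FreeRBAData

variable {k X lam}

/-- The `⋄`-product `w₁ ⋄ (w₂ ⋄ (⋯ ⋄ (w_m ⋄ 1)))` of a sequence of letters. -/
noncomputable def prodList (D : FreeRBAData k X lam) (l : List (RBL X)) : RBMod k X :=
  l.foldr (fun a acc => D.d (letterMod k a) acc) (sing k RBWord.one)

end FreeRBAData
section AuxProof

namespace RBL

variable {X : Type u}

lemma degW_append (l1 l2 : List (RBL X)) : degW (l1 ++ l2) = degW l1 + degW l2 := by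
  induction l1 with
  | nil => simp [degW]
  | cons a l ih => simp [degW, ih]; omega

lemma valid_of_wordValid_cons {a : RBL X} {l} (h : wordValid (a :: l)) : valid a := by
  cases l with
  | nil => exact h
  | cons b l =>
    rw [wordValid] at h
    exact h.1

lemma wordValid_of_cons {a : RBL X} {l} (h : wordValid (a :: l)) : wordValid l := by
  cases l with
  | nil => exact wordValid_nil
  | cons b l =>
    rw [wordValid] at h
    exact h.2.2

lemma valid_last {l : List (RBL X)} {a : RBL X} (h : wordValid (l ++ [a])) : valid a := by
  induction l with
  | nil => exact h
  | cons c l ih => exact ih (wordValid_of_cons h)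

lemma wordValid_append {l1 l2 : List (RBL X)} {a b : RBL X}
    (h1 : wordValid (l1 ++ [a])) (h2 : wordValid (b :: l2))
    (hab : ¬(a.isBr = true ∧ b.isBr = true)) :
    wordValid (l1 ++ a :: b :: l2) := by
  induction l1 with
  | nil =>
    simp only [List.nil_append] at h1 ⊢
    rw [wordValid]
    exact ⟨h1, hab, h2⟩
  | cons c l ih =>
    simp only [List.cons_append] at h1 ⊢
    cases l with
    | nil =>
      simp only [List.nil_append] at ih h1 ⊢
      rw [wordValid] at h1 ⊢
      exact ⟨h1.1, h1.2.1, ih h1.2.2⟩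
    | cons d l' =>
      simp only [List.cons_append] at ih h1 ⊢
      rw [wordValid] at h1 ⊢
      exact ⟨h1.1, h1.2.1, ih h1.2.2⟩

end RBL

variable {k : Type v} [CommRing k] {X : Type u}

lemma Pop_sing (w : RBWord X) :
    Pop k X (sing k w) = sing k ⟨[RBL.br w.1], RBL.wordValid_br w.2⟩ := by
  simp [Pop, sing, Finsupp.mapDomain_single]
  exact Finsupp.mapDomain_single

/-- A linear map sending degree-`s` singles into `Hdeg n` sends `Hdeg m` into `Hdeg n`. -/
lemma mapF_mem (F : RBMod k X →ₗ[k] RBMod k X) {m n : ℕ}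
    (h : ∀ w : RBWord X, w.deg = m → F (sing k w) ∈ Hdeg k X n)
    {f : RBMod k X} (hf : f ∈ Hdeg k X m) : F f ∈ Hdeg k X n := by
  rw [Hdeg, Finsupp.supported_eq_span_single] at hf
  refine Submodule.span_induction ?_ ?_ ?_ ?_ hf
  · rintro _ ⟨w, hw, rfl⟩
    exact h w hw
  · simp
  · intro x y _ _ hx hy
    rw [map_add]; exact add_mem hx hy
  · intro c x _ hx
    rw [map_smul]; exact Submodule.smul_mem _ _ hx

lemma sing_mem_Hdeg {w : RBWord X} {n : ℕ} (h : w.deg = n) : sing k w ∈ Hdeg k X n :=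
  Finsupp.single_mem_supported k 1 h

lemma Pop_mem {m : ℕ} {f : RBMod k X} (hf : f ∈ Hdeg k X m) :
    Pop k X f ∈ Hdeg k X (m + 1) := by
  refine mapF_mem _ (fun w hw => ?_) hf
  rw [Pop_sing]
  refine sing_mem_Hdeg ?_
  show RBL.degW [RBL.br w.1] = m + 1
  simp [RBL.degW, RBL.degL]
  exact hw

lemma concatLR_mem (u₀ v₀ : List (RBL X)) {m : ℕ} {f : RBMod k X} (hf : f ∈ Hdeg k X m) :
    concatLR k X u₀ v₀ f ∈ Hdeg k X (RBL.degW u₀ + m + RBL.degW v₀) := by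
  refine mapF_mem _ (fun w hw => ?_) hf
  rw [concatLR, sing, Finsupp.lsum_single]
  by_cases h : RBL.wordValid (u₀ ++ w.1 ++ v₀)
  · rw [dif_pos h]
    change sing k (⟨u₀ ++ w.1 ++ v₀, h⟩ : RBWord X) ∈ _
    refine sing_mem_Hdeg ?_
    show RBL.degW (u₀ ++ w.1 ++ v₀) = _
    rw [RBL.degW_append, RBL.degW_append]
    have hw' : RBL.degW w.1 = m := hw
    omega
  · rw [dif_neg h]
    simp

lemma key_mem (D : FreeRBAData k X (0 : k)) :
    ∀ n (u v : RBWord X), u.deg + v.deg ≤ n →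
      D.d (sing k u) (sing k v) ∈ Hdeg k X (u.deg + v.deg) := by
  intro n
  induction n using Nat.strong_induction_on with
  | _ n ih =>
    intro u v hn
    obtain ⟨lu, hu⟩ := u
    obtain ⟨lv, hv⟩ := v
    rcases List.eq_nil_or_concat' lu with rfl | ⟨u₀, a, rfl⟩
    · rw [D.d_concat ⟨[], hu⟩ ⟨lv, hv⟩ (by simpa using hv)]
      refine sing_mem_Hdeg ?_
      show RBL.degW ([] ++ lv) = _
      simp [RBL.degW, RBWord.deg]
    · rcases lv with _ | ⟨b, v₀⟩
      · have h : RBL.wordValid ((u₀ ++ [a]) ++ ([] : List (RBL X))) := by simpa using hu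
        rw [D.d_concat ⟨u₀ ++ [a], hu⟩ ⟨[], hv⟩ h]
        refine sing_mem_Hdeg ?_
        show RBL.degW ((u₀ ++ [a]) ++ []) = _
        simp [RBL.degW, RBWord.deg]
      · -- both words nonempty
        by_cases hab : a.isBr = true ∧ b.isBr = true
        · -- both junction letters are brackets
          obtain ⟨la, rfl⟩ : ∃ la, a = RBL.br la := by
            cases a with
            | var x => simp [RBL.isBr] at hab
            | br l => exact ⟨l, rfl⟩
          obtain ⟨lb, rfl⟩ : ∃ lb, b = RBL.br lb := by
            cases b with
            | var x => simp [RBL.isBr] at hab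
            | br l => exact ⟨l, rfl⟩
          have hla : RBL.wordValid la := RBL.valid_last hu
          have hlb : RBL.wordValid lb := RBL.valid_of_wordValid_cons hv
          have hrw := D.d_br u₀ v₀ ⟨la, hla⟩ ⟨lb, hlb⟩ hu hv
          rw [hrw, zero_smul, add_zero]
          have hdu : RBL.degW (u₀ ++ [RBL.br la]) =
              RBL.degW u₀ + (RBL.degW la + 1) := by
            rw [RBL.degW_append]; simp [RBL.degW, RBL.degL]
          have hdv : RBL.degW (RBL.br lb :: v₀) =
              (RBL.degW lb + 1) + RBL.degW v₀ := by
            simp [RBL.degW, RBL.degL]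
          have hn' : RBL.degW la + RBL.degW lb + 2 ≤ n := by
            have hn2 : RBL.degW (u₀ ++ [RBL.br la]) + RBL.degW (RBL.br lb :: v₀) ≤ n := hn
            rw [hdu, hdv] at hn2
            omega
          set A : RBWord X := ⟨la, hla⟩
          set B : RBWord X := ⟨lb, hlb⟩
          have hA' : RBWord.deg (⟨[RBL.br la], RBL.wordValid_br hla⟩ : RBWord X)
              = RBL.degW la + 1 := by simp [RBWord.deg, RBL.degW, RBL.degL]
          have hB' : RBWord.deg (⟨[RBL.br lb], RBL.wordValid_br hlb⟩ : RBWord X)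
              = RBL.degW lb + 1 := by simp [RBWord.deg, RBL.degW, RBL.degL]
          have m1 : D.d (Pop k X (sing k A)) (sing k B)
              ∈ Hdeg k X (RBL.degW la + RBL.degW lb + 1) := by
            rw [Pop_sing]
            have := ih (n - 1) (by omega) ⟨[RBL.br la], RBL.wordValid_br hla⟩ B
              (by rw [hA']; show _ + RBL.degW lb ≤ _; omega)
            have hidx : RBWord.deg (⟨[RBL.br la], RBL.wordValid_br hla⟩ : RBWord X) + B.deg
                = RBL.degW la + RBL.degW lb + 1 := by
              rw [hA']; show _ + RBL.degW lb = _; omega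
            rwa [hidx] at this
          have m2 : D.d (sing k A) (Pop k X (sing k B))
              ∈ Hdeg k X (RBL.degW la + RBL.degW lb + 1) := by
            rw [Pop_sing]
            have := ih (n - 1) (by omega) A ⟨[RBL.br lb], RBL.wordValid_br hlb⟩
              (by rw [hB']; show RBL.degW la + _ ≤ _; omega)
            have hidx : A.deg + RBWord.deg (⟨[RBL.br lb], RBL.wordValid_br hlb⟩ : RBWord X)
                = RBL.degW la + RBL.degW lb + 1 := by
              rw [hB']; show RBL.degW la + _ = _; omega
            rwa [hidx] at this
          have msum : Pop k X (D.d (Pop k X (sing k A)) (sing k B))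
                + Pop k X (D.d (sing k A) (Pop k X (sing k B)))
              ∈ Hdeg k X (RBL.degW la + RBL.degW lb + 2) :=
            add_mem (Pop_mem m1) (Pop_mem m2)
          have final := concatLR_mem (k := k) u₀ v₀ msum
          have hidx : RBL.degW u₀ + (RBL.degW la + RBL.degW lb + 2) + RBL.degW v₀
              = RBWord.deg (⟨u₀ ++ [RBL.br la], hu⟩ : RBWord X)
                + RBWord.deg (⟨RBL.br lb :: v₀, hv⟩ : RBWord X) := by
            show _ = RBL.degW (u₀ ++ [RBL.br la]) + RBL.degW (RBL.br lb :: v₀)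
            rw [hdu, hdv]; omega
          rwa [hidx] at final
        · -- junction is safe: concatenation is valid
          have h : RBL.wordValid ((u₀ ++ [a]) ++ (b :: v₀)) := by
            rw [List.append_assoc]
            exact RBL.wordValid_append hu hv hab
          rw [D.d_concat ⟨u₀ ++ [a], hu⟩ ⟨b :: v₀, hv⟩ h]
          refine sing_mem_Hdeg ?_
          show RBL.degW ((u₀ ++ [a]) ++ (b :: v₀)) = _
          rw [RBL.degW_append]
          rfl

end AuxProof

/-- In the free Rota-Baxter algebra of weight zero, the product `⋄`
respects the total degree grading: `H^(p) ⋄ H^(q) ⊆ H^(p+q)` for all `p, q ≥ 0`. -/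
theorem product_respects_grading_weight_zero
    {k : Type v} [CommRing k] {X : Type u} (D : FreeRBAData k X (0 : k))
    (p q : ℕ) (f : RBMod k X) (hf : f ∈ Hdeg k X p) (g : RBMod k X) (hg : g ∈ Hdeg k X q) :
    D.d f g ∈ Hdeg k X (p + q) := by
  rw [Hdeg, Finsupp.supported_eq_span_single] at hf hg
  refine Submodule.span_induction ?_ ?_ ?_ ?_ hf
  · rintro _ ⟨u, hu, rfl⟩
    refine Submodule.span_induction ?_ ?_ ?_ ?_ hg
    · rintro _ ⟨v, hv, rfl⟩
      have := key_mem D (u.deg + v.deg) u v le_rfl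
      rw [Set.mem_setOf_eq] at hu hv
      rw [hu, hv] at this
      exact this
    · simp
    · intro x y _ _ hx hy
      rw [map_add]; exact add_mem hx hy
    · intro c x _ hx
      rw [map_smul]; exact Submodule.smul_mem _ _ hx
  · simp
  · intro x y _ _ hx hy
    rw [map_add, LinearMap.add_apply]; exact add_mem hx hy
  · intro c x _ hx
    rw [map_smul, LinearMap.smul_apply]; exact Submodule.smul_mem _ _ hx
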